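/- Let V be a quadratic space over ℚ_p with a self-dual ℤ_p-lattice Λ, and let v ∈ Λ be a primitive vector (v ∉ pΛ) with ord_p(q(v)) = d ≥ 1. Then there exists a primitive isotropic vector ṽ ∈ Λ with q(ṽ) = 0 and ṽ ≡ v mod p^d Λ. -/

import Mathlib

/-- If v is a primitive vector of a self-dual ℤ_p-lattice Λ with
ord_p(q(v)) = d ≥ 1, then there is a primitive isotropic vector ṽ ∈ Λ with
ṽ ≡ v mod p^d Λ. -/
theorem stmt_10 {p : ℕ} [Fact p.Prime] (hodd : p ≠ 2)
    {V : Type*} [AddCommGroup V] [Module ℚ_[p] V] [FiniteDimensional ℚ_[p] V]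
    [Module ℤ_[p] V] [IsScalarTower ℤ_[p] ℚ_[p] V]
    (Q : QuadraticForm ℚ_[p] V)
    (hnd : ∀ w : V, (∀ x : V, QuadraticMap.polar (⇑Q) w x = 0) → w = 0)
    (Λ : Submodule ℤ_[p] V) (hfg : Λ.FG)
    (hfull : Submodule.span ℚ_[p] (Λ : Set V) = ⊤)
    (hself : (Λ : Set V) = {w : V | ∀ l ∈ Λ,
      QuadraticMap.polar (⇑Q) w l ∈ Set.range (algebraMap ℤ_[p] ℚ_[p])})
    (v : V) (hv : v ∈ Λ)
    (hprim : ¬ ∃ u ∈ Λ, v = (p : ℤ_[p]) • u)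
    (d : ℕ) (hd : 1 ≤ d)
    (hQv : Q v ≠ 0) (hval : (Q v).valuation = (d : ℤ)) :
    ∃ w ∈ Λ, Q w = 0 ∧ (¬ ∃ u ∈ Λ, w = (p : ℤ_[p]) • u) ∧
      ∃ u ∈ Λ, w - v = ((p : ℤ_[p]) ^ d) • u := by
  have hp : (1 : ℝ) < p := by exact_mod_cast (Fact.out : p.Prime).one_lt
  have hp0 : (0 : ℝ) < p := lt_trans zero_lt_one hp
  -- range of algebraMap = closed unit ball
  have hrange : ∀ x : ℚ_[p], x ∈ Set.range (algebraMap ℤ_[p] ℚ_[p]) ↔ ‖x‖ ≤ 1 := by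
    intro x
    constructor
    · rintro ⟨y, rfl⟩
      simpa [PadicInt.algebraMap_apply] using y.2
    · intro hx
      exact ⟨⟨x, hx⟩, rfl⟩
  have hmem : ∀ w : V, w ∈ Λ ↔ ∀ l ∈ Λ, ‖QuadraticMap.polar (⇑Q) w l‖ ≤ 1 := by
    intro w
    have := Set.ext_iff.mp hself w
    simp only [Set.mem_setOf_eq, SetLike.mem_coe] at this
    rw [this]
    exact ⟨fun h l hl => (hrange _).mp (h l hl), fun h l hl => (hrange _).mpr (h l hl)⟩
  -- find l ∈ Λ with ‖polar v l‖ = 1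
  have hexl : ∃ l ∈ Λ, ‖QuadraticMap.polar (⇑Q) v l‖ = 1 := by
    by_contra hno
    push_neg at hno
    have hall : ∀ l ∈ Λ, ‖QuadraticMap.polar (⇑Q) v l‖ ≤ (p : ℝ)⁻¹ := by
      intro l hl
      have h1 : ‖QuadraticMap.polar (⇑Q) v l‖ ≤ 1 := (hmem v).mp hv l hl
      have h2 : ‖QuadraticMap.polar (⇑Q) v l‖ < 1 := lt_of_le_of_ne h1 (hno l hl)
      have := (Padic.norm_le_pow_iff_norm_lt_pow_add_one (QuadraticMap.polar (⇑Q) v l)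
        (-1)).mpr (by simpa using h2)
      simpa using this
    set u : V := ((p : ℚ_[p]))⁻¹ • v with hu_def
    have hpne : ((p : ℚ_[p])) ≠ 0 := by
      exact_mod_cast (Fact.out : p.Prime).ne_zero
    have hu : u ∈ Λ := by
      rw [hmem]
      intro l hl
      have : QuadraticMap.polar (⇑Q) u l = ((p : ℚ_[p]))⁻¹ * QuadraticMap.polar (⇑Q) v l := by
        rw [hu_def, QuadraticMap.polar_smul_left, smul_eq_mul]
      rw [this, norm_mul, norm_inv, Padic.norm_p, inv_inv]
      calc (p : ℝ) * ‖QuadraticMap.polar (⇑Q) v l‖ ≤ (p : ℝ) * (p : ℝ)⁻¹ :=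
            mul_le_mul_of_nonneg_left (hall l hl) (le_of_lt hp0)
        _ = 1 := mul_inv_cancel₀ (ne_of_gt hp0)
    exact hprim ⟨u, hu, by
      rw [← IsScalarTower.algebraMap_smul ℚ_[p] ((p : ℤ_[p])) u]
      push_cast
      rw [hu_def, smul_smul, mul_inv_cancel₀ hpne, one_smul]⟩
  obtain ⟨l, hl, hbl⟩ := hexl
  -- the three coefficients
  have hb_le : ‖QuadraticMap.polar (⇑Q) v l‖ ≤ 1 := le_of_eq hbl
  have ha_le : ‖Q l‖ ≤ 1 := by
    have h2 : QuadraticMap.polar (⇑Q) l l = 2 * Q l := by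
      have := QuadraticMap.polar_self (Q := Q) l
      simpa [two_smul, two_mul] using this
    have hpl : ‖QuadraticMap.polar (⇑Q) l l‖ ≤ 1 := (hmem l).mp hl l hl
    have h2norm : ‖(2 : ℚ_[p])‖ = 1 := by
      have hle : ‖((2 : ℤ) : ℚ_[p])‖ ≤ 1 := Padic.norm_int_le_one 2
      have hnlt : ¬ ‖((2 : ℤ) : ℚ_[p])‖ < 1 := by
        rw [Padic.norm_intCast_lt_one_iff]
        intro hdvd
        have hpd : p ∣ 2 := by exact_mod_cast hdvd
        exact hodd ((Nat.prime_dvd_prime_iff_eq Fact.out Nat.prime_two).mp hpd)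
      have h1 : ‖((2 : ℤ) : ℚ_[p])‖ = 1 := le_antisymm hle (not_lt.mp hnlt)
      have h2c : ((2 : ℤ) : ℚ_[p]) = (2 : ℚ_[p]) := by push_cast; ring
      rwa [h2c] at h1
    calc ‖Q l‖ = ‖(2 : ℚ_[p])‖ * ‖Q l‖ := by rw [h2norm, one_mul]
      _ = ‖QuadraticMap.polar (⇑Q) l l‖ := by rw [← norm_mul, h2]
      _ ≤ 1 := hpl
  have hc_norm : ‖Q v‖ = (p : ℝ) ^ (-(d : ℤ)) := by
    rw [Padic.norm_eq_zpow_neg_valuation hQv, hval]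
  have hc_lt : ‖Q v‖ < 1 := by
    rw [hc_norm]
    calc (p : ℝ) ^ (-(d : ℤ)) < (p : ℝ) ^ (0 : ℤ) := by
          apply zpow_lt_zpow_right₀ hp
          omega
      _ = 1 := zpow_zero _
  have hc_le : ‖Q v‖ ≤ 1 := le_of_lt hc_lt
  set a₀ : ℤ_[p] := ⟨Q l, ha_le⟩ with ha₀
  set b₀ : ℤ_[p] := ⟨QuadraticMap.polar (⇑Q) v l, hb_le⟩ with hb₀
  set c₀ : ℤ_[p] := ⟨Q v, hc_le⟩ with hc₀
  have hb₀norm : ‖b₀‖ = 1 := by rw [PadicInt.norm_def]; exact hbl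
  have hc₀norm : ‖c₀‖ = (p : ℝ) ^ (-(d : ℤ)) := by rw [PadicInt.norm_def]; exact hc_norm
  have hc₀ne : c₀ ≠ 0 := by
    intro h
    apply hQv
    have := congrArg (fun x : ℤ_[p] => (x : ℚ_[p])) h
    simpa [hc₀] using this
  -- Hensel
  set F : Polynomial ℤ_[p] :=
    Polynomial.C a₀ * Polynomial.X ^ 2 - Polynomial.C b₀ * Polynomial.X + Polynomial.C c₀
    with hF
  have hF0 : F.eval 0 = c₀ := by simp [hF]
  have hF'0 : F.derivative.eval 0 = -b₀ := by
    simp [hF, Polynomial.derivative_sub, Polynomial.derivative_add]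
  have hnorm : ‖F.eval 0‖ < ‖F.derivative.eval 0‖ ^ 2 := by
    rw [hF0, hF'0, norm_neg, hb₀norm, one_pow, hc₀norm]
    calc (p : ℝ) ^ (-(d : ℤ)) < (p : ℝ) ^ (0 : ℤ) := by
          apply zpow_lt_zpow_right₀ hp
          omega
      _ = 1 := zpow_zero _
  obtain ⟨z, hz_root, hz_dist, -, -⟩ := hensels_lemma hnorm
  rw [Polynomial.aeval_def, Algebra.algebraMap_self, Polynomial.eval₂_id, hF'0, norm_neg, hb₀norm, sub_zero] at hz_dist
  have heq : a₀ * z ^ 2 - b₀ * z + c₀ = 0 := by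
    have := hz_root
    simpa [hF] using this
  -- bound ‖z‖ ≤ ‖c₀‖
  have hz_le : ‖z‖ ≤ (p : ℝ) ^ (-(d : ℤ)) := by
    rcases le_or_gt ‖z‖ ‖c₀‖ with h | h
    · rwa [hc₀norm] at h
    · exfalso
      have hbz : b₀ * z = a₀ * z ^ 2 + c₀ := by linear_combination -heq
      have h1 : ‖z‖ = ‖b₀ * z‖ := by rw [norm_mul, hb₀norm, one_mul]
      have h2 : ‖a₀ * z ^ 2 + c₀‖ ≤ max (‖z‖ ^ 2) ‖c₀‖ := by
        apply le_trans (PadicInt.nonarchimedean _ _)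
        apply max_le_max _ le_rfl
        calc ‖a₀ * z ^ 2‖ = ‖a₀‖ * ‖z‖ ^ 2 := by
              rw [norm_mul, sq, sq, norm_mul]
          _ ≤ 1 * ‖z‖ ^ 2 := by
              apply mul_le_mul_of_nonneg_right (PadicInt.norm_le_one a₀) (by positivity)
          _ = ‖z‖ ^ 2 := one_mul _
      have h3 : ‖z‖ ≤ max (‖z‖ ^ 2) ‖c₀‖ := by
        calc ‖z‖ = ‖b₀ * z‖ := h1
          _ = ‖a₀ * z ^ 2 + c₀‖ := by rw [hbz]
          _ ≤ max (‖z‖ ^ 2) ‖c₀‖ := h2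
      have hz_pos : 0 < ‖z‖ := lt_of_le_of_lt (norm_nonneg c₀) h
      rcases max_cases (‖z‖ ^ 2) ‖c₀‖ with ⟨hm, -⟩ | ⟨hm, -⟩
      · rw [hm] at h3
        nlinarith [hz_dist]
      · rw [hm] at h3
        exact absurd h3 (not_le_of_gt h)
  -- z = p^d * z'
  have hz_dvd : ((p : ℤ_[p]) ^ d) ∣ z := by
    have := (PadicInt.norm_le_pow_iff_mem_span_pow z d).mp (by exact_mod_cast hz_le)
    rwa [Ideal.mem_span_singleton] at this
  obtain ⟨z', hz'⟩ := hz_dvd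
  -- the isotropic vector
  refine ⟨v - z • l, Submodule.sub_mem Λ hv (Submodule.smul_mem Λ z hl), ?_, ?_, ?_⟩
  · -- Q (v - z • l) = 0
    have hsmul : z • l = ((z : ℚ_[p])) • l := by
      rw [← IsScalarTower.algebraMap_smul ℚ_[p] z l, PadicInt.algebraMap_apply]
    have hpolar : Q (v + (-(z : ℚ_[p])) • l) =
        Q v + Q ((-(z : ℚ_[p])) • l) + QuadraticMap.polar (⇑Q) v ((-(z : ℚ_[p])) • l) := by
      simp [QuadraticMap.polar]
    have hcast : (z : ℚ_[p]) ^ 2 * Q l - QuadraticMap.polar (⇑Q) v l * (z : ℚ_[p]) + Q v = 0 := by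
      have h0 : (a₀ : ℚ_[p]) * (z : ℚ_[p]) ^ 2 - (b₀ : ℚ_[p]) * (z : ℚ_[p]) + (c₀ : ℚ_[p]) = 0 := by
        exact_mod_cast congrArg (fun x : ℤ_[p] => (x : ℚ_[p])) heq
      have hA : (a₀ : ℚ_[p]) = Q l := rfl
      have hB : (b₀ : ℚ_[p]) = QuadraticMap.polar (⇑Q) v l := rfl
      have hC : (c₀ : ℚ_[p]) = Q v := rfl
      rw [hA, hB, hC] at h0
      linear_combination h0
    rw [sub_eq_add_neg, hsmul, ← neg_smul, hpolar, QuadraticMap.map_smul,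
      QuadraticMap.polar_smul_right]
    simp only [smul_eq_mul]
    linear_combination hcast
  · -- primitivity
    rintro ⟨u, hu, huw⟩
    obtain ⟨e, rfl⟩ : ∃ e, d = e + 1 := ⟨d - 1, (Nat.succ_pred_eq_of_pos hd).symm⟩
    apply hprim
    refine ⟨u + ((p : ℤ_[p]) ^ e * z') • l, Submodule.add_mem Λ hu
      (Submodule.smul_mem Λ _ hl), ?_⟩
    have : v = (v - z • l) + z • l := by abel
    rw [this, huw, hz', smul_add, smul_smul]
    congr 1
    congr 1
    ring
  · -- congruence
    refine ⟨-(z' • l), Submodule.neg_mem Λ (Submodule.smul_mem Λ z' hl), ?_⟩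
    rw [hz']
    rw [smul_neg, ← smul_smul]
    abel
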